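/- (Christoffel-type expansion) Let μ be a positive measure on ℝ with monic orthogonal polynomials p₀,p₁,…, let α ∈ ℝ, and let r be the largest root of p_n + α p_{n−1}. Then (p_n(t) + α p_{n−1}(t))/(t − r) is a linear combination of p₀(t),…,p_{n−1}(t) with all coefficients strictly positive. -/

import Mathlib

open MeasureTheory Polynomial Filter


private lemma aux_pos_of_wronskian (f g : Polynomial ℝ) (r : ℝ) (hg : g.Monic)
    (hW : ∀ x : ℝ, 0 < (f.derivative * g - g.derivative * f).eval x)
    (hf : ∀ x : ℝ, r ≤ x → 0 ≤ f.eval x) :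
    ∀ x : ℝ, r ≤ x → 0 < g.eval x := by
  by_contra hcon
  push_neg at hcon
  obtain ⟨x₀, hrx₀, hx₀⟩ := hcon
  rcases Nat.eq_zero_or_pos g.natDegree with h0 | hdpos
  · have : g = 1 := hg.natDegree_eq_zero.mp h0
    rw [this] at hx₀; simp at hx₀; linarith
  have hdeg : 0 < g.degree := natDegree_pos_iff_degree_pos.mp hdpos
  have htop := Polynomial.tendsto_atTop_of_leadingCoeff_nonneg g hdeg (by simp [hg.leadingCoeff])
  obtain ⟨y, hy⟩ := (htop.eventually_gt_atTop 0).exists_forall_of_atTop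
  have hx₀y : x₀ < y := by
    by_contra h; push_neg at h; exact absurd (hy x₀ h) (not_lt.mpr hx₀)
  -- find a root in [x₀, y]
  have hcont : ContinuousOn (fun x => g.eval x) (Set.Icc x₀ y) :=
    (Polynomial.continuous g).continuousOn
  have hIvt := intermediate_value_Icc hx₀y.le hcont
  have h0mem : (0:ℝ) ∈ Set.Icc (g.eval x₀) (g.eval y) := ⟨hx₀, (hy y le_rfl).le⟩
  obtain ⟨c, hc, hc0⟩ := hIvt h0mem
  -- largest root ≥ x₀
  set S := g.roots.toFinset.filter (fun z => x₀ ≤ z) with hS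
  have hcS : c ∈ S := by
    simp only [hS, Finset.mem_filter, Multiset.mem_toFinset, mem_roots hg.ne_zero]
    exact ⟨hc0, hc.1⟩
  have hne : S.Nonempty := ⟨c, hcS⟩
  set t := S.max' hne with htdef
  have htS : t ∈ S := S.max'_mem hne
  have ht0 : g.eval t = 0 := by
    have := htS; simp only [hS, Finset.mem_filter, Multiset.mem_toFinset,
      mem_roots hg.ne_zero] at this
    exact this.1
  have hx₀t : x₀ ≤ t := by
    have := htS; simp only [hS, Finset.mem_filter] at this; exact this.2
  have hrt : r ≤ t := le_trans hrx₀ hx₀t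
  have hposR : ∀ z : ℝ, t < z → 0 < g.eval z := by
    intro z hz
    rcases lt_trichotomy (g.eval z) 0 with h | h | h
    · have hzy : z < y := by
        by_contra hh; push_neg at hh; exact absurd (hy z hh) (not_lt.mpr h.le)
      have hIvt2 := intermediate_value_Icc hzy.le ((Polynomial.continuous g).continuousOn)
      obtain ⟨c', hc', hc'0⟩ := hIvt2 ⟨h.le, (hy y le_rfl).le⟩
      have hc'S : c' ∈ S := by
        simp only [hS, Finset.mem_filter, Multiset.mem_toFinset, mem_roots hg.ne_zero]
        exact ⟨hc'0, le_trans hx₀t (le_trans hz.le hc'.1)⟩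
      have := S.le_max' c' hc'S
      have : c' ≤ t := this
      linarith [hc'.1]
    · exfalso
      have hzS : z ∈ S := by
        simp only [hS, Finset.mem_filter, Multiset.mem_toFinset, mem_roots hg.ne_zero]
        exact ⟨h, le_trans hx₀t hz.le⟩
      have := S.le_max' z hzS
      linarith
    · exact h
  -- Wronskian at t
  have hWt := hW t
  rw [eval_sub, eval_mul, eval_mul, ht0] at hWt
  have hft : 0 ≤ f.eval t := hf t hrt
  have hft' : 0 < f.eval t := by
    rcases hft.lt_or_eq with h | h
    · exact h
    · exfalso; rw [← h] at hWt; linarith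
  have hg't : g.derivative.eval t < 0 := by nlinarith
  -- slope contradiction
  have hd := (g.hasDerivAt t)
  rw [hasDerivAt_iff_tendsto_slope] at hd
  have h2 : ∀ᶠ z in nhdsWithin t {t}ᶜ, slope (fun x => g.eval x) t z < 0 :=
    hd.eventually_lt_const hg't
  have h2' : ∀ᶠ z in nhdsWithin t (Set.Ioi t), slope (fun x => g.eval x) t z < 0 :=
    h2.filter_mono (nhdsWithin_mono t (fun z hz => ne_of_gt hz))
  obtain ⟨z, hz1, hz2⟩ := (h2'.and eventually_mem_nhdsWithin).exists
  have hz2' : t < z := hz2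
  have : 0 < slope (fun x => g.eval x) t z := by
    rw [slope_def_field]
    exact div_pos (by rw [ht0]; simpa using hposR z hz2') (by linarith)
  linarith

private lemma aux_expand (p : ℕ → Polynomial ℝ) (hmonic : ∀ i, (p i).Monic)
    (hdeg : ∀ i, (p i).natDegree = i) :
    ∀ m (u : Polynomial ℝ), u.natDegree ≤ m →
      ∃ c : ℕ → ℝ, u = ∑ j ∈ Finset.range (m + 1), C (c j) * p j := by
  intro m
  induction m with
  | zero =>
    intro u hu
    refine ⟨fun _ => u.coeff 0, ?_⟩
    have hp0 : p 0 = 1 := (hmonic 0).natDegree_eq_zero.mp (hdeg 0)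
    have hu' : u = C (u.coeff 0) := Polynomial.eq_C_of_natDegree_le_zero hu
    simp [hp0, ← hu']
  | succ m ih =>
    intro u hu
    set v := u - C (u.coeff (m + 1)) * p (m + 1) with hv
    have hvd : v.natDegree ≤ m := by
      rw [natDegree_le_iff_coeff_eq_zero]
      intro N hN
      rcases Nat.lt_or_ge N (m + 2) with h | h
      · have hN1 : N = m + 1 := by omega
        subst hN1
        have hlead : (p (m + 1)).coeff (m + 1) = 1 := by
          have := (hmonic (m + 1)).coeff_natDegree
          rwa [hdeg (m + 1)] at this
        simp [hv, coeff_C_mul, hlead]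
      · have h1 : u.coeff N = 0 := coeff_eq_zero_of_natDegree_lt (by omega)
        have h2 : (p (m + 1)).coeff N = 0 :=
          coeff_eq_zero_of_natDegree_lt (by rw [hdeg]; omega)
        simp [hv, coeff_C_mul, h1, h2]
    obtain ⟨c, hc⟩ := ih v hvd
    refine ⟨fun j => if j = m + 1 then u.coeff (m + 1) else c j, ?_⟩
    rw [Finset.sum_range_succ]
    have hsum : ∑ j ∈ Finset.range (m + 1),
        C (if j = m + 1 then u.coeff (m + 1) else c j) * p j
        = ∑ j ∈ Finset.range (m + 1), C (c j) * p j := by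
      apply Finset.sum_congr rfl
      intro j hj
      rw [Finset.mem_range] at hj
      simp [Nat.ne_of_lt hj]
    rw [hsum, ← hc]
    simp [hv]
private lemma aux_int_mul {μ : Measure ℝ}
    (hint : ∀ q : Polynomial ℝ, Integrable (fun x => q.eval x) μ)
    (f g : Polynomial ℝ) : Integrable (fun x => f.eval x * g.eval x) μ := by
  have := hint (f * g); simpa [eval_mul] using this

private lemma aux_ip_sum {μ : Measure ℝ}
    (hint : ∀ q : Polynomial ℝ, Integrable (fun x => q.eval x) μ)
    (p : ℕ → Polynomial ℝ) (f : Polynomial ℝ) (m : ℕ) (c : ℕ → ℝ) :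
    ∫ x, f.eval x * (∑ j ∈ Finset.range m, C (c j) * p j).eval x ∂μ
      = ∑ j ∈ Finset.range m, c j * ∫ x, f.eval x * (p j).eval x ∂μ := by
  have h1 : (fun x => f.eval x * (∑ j ∈ Finset.range m, C (c j) * p j).eval x)
      = fun x => ∑ j ∈ Finset.range m, c j * (f.eval x * (p j).eval x) := by
    funext x
    rw [eval_finset_sum, Finset.mul_sum]
    apply Finset.sum_congr rfl
    intro j _
    simp only [eval_mul, eval_C]
    ring
  rw [h1, integral_finset_sum]
  · exact Finset.sum_congr rfl fun j _ => integral_const_mul _ _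
  · intro j _; exact (aux_int_mul hint f (p j)).const_mul _

/-- orthogonality to all lower-degree polynomials -/
private lemma aux_orth_lower {μ : Measure ℝ}
    (hint : ∀ q : Polynomial ℝ, Integrable (fun x => q.eval x) μ)
    (p : ℕ → Polynomial ℝ) (hmonic : ∀ i, (p i).Monic) (hdeg : ∀ i, (p i).natDegree = i)
    (horth : ∀ i j, i ≠ j → ∫ x, (p i).eval x * (p j).eval x ∂μ = 0)
    (k : ℕ) (u : Polynomial ℝ) (hu : u.natDegree < k) :
    ∫ x, (p k).eval x * u.eval x ∂μ = 0 := by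
  obtain ⟨c, hc⟩ := aux_expand p hmonic hdeg (k - 1) u (by omega)
  have hk : k - 1 + 1 = k := by omega
  rw [hc, hk, aux_ip_sum hint p]
  apply Finset.sum_eq_zero
  intro j hj
  rw [Finset.mem_range] at hj
  rw [horth k j (by omega)]
  ring

private lemma aux_zero_of_orth {μ : Measure ℝ}
    (hint : ∀ q : Polynomial ℝ, Integrable (fun x => q.eval x) μ)
    (hpos : ∀ q : Polynomial ℝ, q ≠ 0 → 0 < ∫ x, (q.eval x) ^ 2 ∂μ)
    (p : ℕ → Polynomial ℝ) (hmonic : ∀ i, (p i).Monic) (hdeg : ∀ i, (p i).natDegree = i)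
    (u : Polynomial ℝ) (h : ∀ j, ∫ x, u.eval x * (p j).eval x ∂μ = 0) : u = 0 := by
  by_contra hu
  have h2 : (0:ℝ) < ∫ x, (u.eval x) ^ 2 ∂μ := hpos u hu
  obtain ⟨c, hc⟩ := aux_expand p hmonic hdeg u.natDegree u le_rfl
  have h3 : ∫ x, u.eval x * u.eval x ∂μ = 0 := by
    conv_lhs => rw [show (fun x => u.eval x * u.eval x)
      = fun x => u.eval x * (∑ j ∈ Finset.range (u.natDegree + 1), C (c j) * p j).eval x by
        funext x; rw [← hc]]
    rw [aux_ip_sum hint p]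
    exact Finset.sum_eq_zero fun j _ => by rw [h j]; ring
  have : ∫ x, (u.eval x) ^ 2 ∂μ = 0 := by
    rw [show (fun x => u.eval x ^ 2) = fun x => u.eval x * u.eval x by funext x; ring]
    exact h3
  linarith
private lemma aux_ip_comm {μ : Measure ℝ} (f g : Polynomial ℝ) :
    ∫ x, f.eval x * g.eval x ∂μ = ∫ x, g.eval x * f.eval x ∂μ := by
  have : (fun x => f.eval x * g.eval x) = fun x => g.eval x * f.eval x :=
    funext fun x => mul_comm _ _
  rw [this]

/-- split the inner product against `g1 - g2 - C a * g3 - C b * g4` -/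
private lemma aux_ip4 {μ : Measure ℝ}
    (hint : ∀ q : Polynomial ℝ, Integrable (fun x => q.eval x) μ)
    (f g1 g2 g3 g4 : Polynomial ℝ) (a b : ℝ) :
    ∫ x, f.eval x * (g1 - g2 - C a * g3 - C b * g4).eval x ∂μ
      = (∫ x, f.eval x * g1.eval x ∂μ) - (∫ x, f.eval x * g2.eval x ∂μ)
        - a * (∫ x, f.eval x * g3.eval x ∂μ) - b * (∫ x, f.eval x * g4.eval x ∂μ) := by
  have h1 : (fun x => f.eval x * (g1 - g2 - C a * g3 - C b * g4).eval x)
      = fun x => f.eval x * g1.eval x - f.eval x * g2.eval x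
          - a * (f.eval x * g3.eval x) - b * (f.eval x * g4.eval x) := by
    funext x; simp only [eval_sub, eval_mul, eval_C]; ring
  rw [h1, integral_sub, integral_sub, integral_sub, integral_const_mul, integral_const_mul]
  · exact aux_int_mul hint f g1
  · exact aux_int_mul hint f g2
  · exact (aux_int_mul hint f g1).sub (aux_int_mul hint f g2)
  · exact (aux_int_mul hint f g3).const_mul a
  · exact ((aux_int_mul hint f g1).sub (aux_int_mul hint f g2)).sub
      ((aux_int_mul hint f g3).const_mul a)
  · exact (aux_int_mul hint f g4).const_mul b

private lemma aux_recurrence {μ : Measure ℝ}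
    (hint : ∀ q : Polynomial ℝ, Integrable (fun x => q.eval x) μ)
    (hpos : ∀ q : Polynomial ℝ, q ≠ 0 → 0 < ∫ x, (q.eval x) ^ 2 ∂μ)
    (p : ℕ → Polynomial ℝ) (hmonic : ∀ i, (p i).Monic) (hdeg : ∀ i, (p i).natDegree = i)
    (horth : ∀ i j, i ≠ j → ∫ x, (p i).eval x * (p j).eval x ∂μ = 0)
    (k : ℕ) (hk : 1 ≤ k) :
    ∃ a b : ℝ, 0 < b ∧ p (k + 1) = (X - C a) * p k - C b * p (k - 1) := by
  set N : ℕ → ℝ := fun i => ∫ x, (p i).eval x * (p i).eval x ∂μ with hN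
  have hNpos : ∀ i, 0 < N i := by
    intro i
    have := hpos (p i) (hmonic i).ne_zero
    have h2 : (fun x => ((p i).eval x) ^ 2) = fun x => (p i).eval x * (p i).eval x := by
      funext x; ring
    rw [h2] at this
    exact this
  set a : ℝ := (∫ x, (p k).eval x * (X * p k).eval x ∂μ) / N k with ha
  set b : ℝ := N k / N (k - 1) with hb
  refine ⟨a, b, div_pos (hNpos k) (hNpos (k - 1)), ?_⟩
  set w : Polynomial ℝ := X * p k - p (k + 1) - C a * p k - C b * p (k - 1) with hw
  -- degree bound on w
  have hwdeg : w.natDegree ≤ k + 1 := by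
    refine le_trans (natDegree_sub_le _ _) ?_
    refine max_le (le_trans (natDegree_sub_le _ _) ?_) ?_
    · refine max_le (le_trans (natDegree_sub_le _ _) ?_) ?_
      · refine max_le (le_trans (natDegree_mul_le) ?_) (by rw [hdeg])
        simp [natDegree_X, hdeg]
        omega
      · refine le_trans (natDegree_mul_le) ?_
        simp [natDegree_C, hdeg]
    · refine le_trans (natDegree_mul_le) ?_
      simp [natDegree_C, hdeg]
      omega
  -- auxiliary degree facts
  have hlow : ∀ m, 1 ≤ m → (X * p (m - 1) - p m).natDegree < m := by
    intro m hm
    have : (X * p (m - 1) - p m).natDegree ≤ m - 1 := by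
      rw [natDegree_le_iff_coeff_eq_zero]
      intro M hM
      have hM1 : 1 ≤ M := by omega
      rw [coeff_sub, show M = (M - 1) + 1 by omega, coeff_X_mul]
      rcases eq_or_lt_of_le (show m ≤ M - 1 + 1 by omega) with h | h
      · have h1 : (p (m - 1)).coeff (M - 1) = 1 := by
          have := (hmonic (m - 1)).coeff_natDegree
          rw [hdeg (m - 1)] at this
          rw [show M - 1 = m - 1 by omega]
          exact this
        have h2 : (p m).coeff (M - 1 + 1) = 1 := by
          have := (hmonic m).coeff_natDegree
          rw [hdeg m] at this
          rw [← h]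
          exact this
        rw [h1, h2]; ring
      · have h1 : (p (m - 1)).coeff (M - 1) = 0 :=
          coeff_eq_zero_of_natDegree_lt (by rw [hdeg]; omega)
        have h2 : (p m).coeff (M - 1 + 1) = 0 :=
          coeff_eq_zero_of_natDegree_lt (by rw [hdeg]; omega)
        rw [h1, h2]; ring
    omega
  -- orthogonality of w to every p j
  have hworth : ∀ j, ∫ x, (p j).eval x * w.eval x ∂μ = 0 := by
    intro j
    have h5 : j + 1 < k ∨ j + 1 = k ∨ j = k ∨ j = k + 1 ∨ k + 2 ≤ j := by omega
    rcases h5 with h | h | h | h | h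
    · -- low j
      rw [hw, aux_ip4 hint]
      have e1 : ∫ x, (p j).eval x * (X * p k).eval x ∂μ = 0 := by
        have hc : (fun x => (p j).eval x * (X * p k).eval x)
            = fun x => (p k).eval x * (X * p j).eval x := by
          funext x; simp only [eval_mul, eval_X]; ring
        rw [hc]
        refine aux_orth_lower hint p hmonic hdeg horth k (X * p j) ?_
        refine lt_of_le_of_lt (natDegree_mul_le) ?_
        simp [natDegree_X, hdeg]; omega
      rw [e1, horth j (k + 1) (by omega), horth j k (by omega), horth j (k - 1) (by omega)]
      ring
    · -- j = k - 1
      rw [hw, aux_ip4 hint]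
      have e1 : ∫ x, (p j).eval x * (X * p k).eval x ∂μ = N k := by
        have hc : (fun x => (p j).eval x * (X * p k).eval x)
            = fun x => (p k).eval x * (X * p j).eval x := by
          funext x; simp only [eval_mul, eval_X]; ring
        rw [hc]
        have hd : X * p j = p k + (X * p (k - 1) - p k) := by
          rw [show j = k - 1 by omega]; ring
        rw [hd]
        have hsplit : (fun x => (p k).eval x * (p k + (X * p (k - 1) - p k)).eval x)
            = fun x => (p k).eval x * (p k).eval x
                + (p k).eval x * (X * p (k - 1) - p k).eval x := by
          funext x; simp only [eval_add]; ring
        rw [hsplit, integral_add (aux_int_mul hint (p k) (p k))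
          (aux_int_mul hint (p k) _),
          aux_orth_lower hint p hmonic hdeg horth k _ (hlow k hk)]
        simp [hN]
      rw [e1, horth j (k + 1) (by omega), horth j k (by omega)]
      have e2 : (∫ x, (p j).eval x * (p (k - 1)).eval x ∂μ) = N (k - 1) := by
        rw [show j = k - 1 by omega]
      rw [e2, hb, div_mul_cancel₀ _ (ne_of_gt (hNpos (k - 1)))]
      ring
    · -- j = k
      rw [hw, aux_ip4 hint, h]
      rw [horth k (k + 1) (by omega), horth k (k - 1) (by omega)]
      have : (∫ x, (p k).eval x * (p k).eval x ∂μ) = N k := rfl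
      rw [this, ha, div_mul_cancel₀ _ (ne_of_gt (hNpos k))]
      ring
    · -- j = k + 1
      rw [hw, aux_ip4 hint, h]
      have e1 : ∫ x, (p (k + 1)).eval x * (X * p k).eval x ∂μ = N (k + 1) := by
        have hd : X * p k = p (k + 1) + (X * p ((k + 1) - 1) - p (k + 1)) := by
          simp
        rw [hd]
        have hsplit : (fun x => (p (k + 1)).eval x
              * (p (k + 1) + (X * p ((k + 1) - 1) - p (k + 1))).eval x)
            = fun x => (p (k + 1)).eval x * (p (k + 1)).eval x
                + (p (k + 1)).eval x * (X * p ((k + 1) - 1) - p (k + 1)).eval x := by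
          funext x; simp only [eval_add]; ring
        rw [hsplit, integral_add (aux_int_mul hint (p (k + 1)) (p (k + 1)))
          (aux_int_mul hint (p (k + 1)) _),
          aux_orth_lower hint p hmonic hdeg horth (k + 1) _ (hlow (k + 1) (by omega))]
        simp [hN]
      rw [e1, horth (k + 1) k (by omega), horth (k + 1) (k - 1) (by omega)]
      have : (∫ x, (p (k + 1)).eval x * (p (k + 1)).eval x ∂μ) = N (k + 1) := rfl
      rw [this]
      ring
    · -- high j
      rw [aux_ip_comm]
      rw [aux_ip_comm] at *
      exact aux_orth_lower hint p hmonic hdeg horth j w (by omega)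
  have hw0 : w = 0 := by
    refine aux_zero_of_orth hint hpos p hmonic hdeg w ?_
    intro j
    rw [aux_ip_comm]
    exact hworth j
  have : X * p k - p (k + 1) - C a * p k - C b * p (k - 1) = 0 := hw0
  linear_combination -this
private lemma aux_Wpos {μ : Measure ℝ}
    (hint : ∀ q : Polynomial ℝ, Integrable (fun x => q.eval x) μ)
    (hpos : ∀ q : Polynomial ℝ, q ≠ 0 → 0 < ∫ x, (q.eval x) ^ 2 ∂μ)
    (p : ℕ → Polynomial ℝ) (hmonic : ∀ i, (p i).Monic) (hdeg : ∀ i, (p i).natDegree = i)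
    (horth : ∀ i j, i ≠ j → ∫ x, (p i).eval x * (p j).eval x ∂μ = 0)
    (k : ℕ) :
    ∀ x : ℝ, 0 < ((p (k + 1)).derivative * p k - (p k).derivative * p (k + 1)).eval x := by
  induction k with
  | zero =>
    intro x
    have hp0 : p 0 = 1 := (hmonic 0).natDegree_eq_zero.mp (hdeg 0)
    have hp1 : p 1 = X + C ((p 1).coeff 0) := (hmonic 1).eq_X_add_C (hdeg 1)
    rw [hp0, hp1]
    simp
  | succ k ih =>
    obtain ⟨a, b, hb, hr⟩ :=
      aux_recurrence hint hpos p hmonic hdeg horth (k + 1) (by omega)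
    have hk1 : k + 1 - 1 = k := by omega
    rw [hk1] at hr
    intro x
    have ihx := ih x
    simp only [eval_sub, eval_mul] at ihx
    have hd : (p (k + 1 + 1)).derivative
        = p (k + 1) + (X - C a) * (p (k + 1)).derivative - C b * (p k).derivative := by
      rw [hr]
      simp only [derivative_sub, derivative_mul, derivative_X, derivative_C]
      ring
    rw [hd, hr]
    simp only [eval_sub, eval_add, eval_mul, eval_X, eval_C]
    nlinarith [sq_nonneg ((p (k + 1)).eval x), mul_pos hb ihx]

private lemma aux_monic_pos (f : Polynomial ℝ) (hf : f.Monic) (hd : 0 < f.degree)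
    (r : ℝ) (h : ∀ x : ℝ, r < x → f.eval x ≠ 0) : ∀ x : ℝ, r < x → 0 < f.eval x := by
  intro x hx
  rcases lt_trichotomy (f.eval x) 0 with h1 | h1 | h1
  · exfalso
    have htop := Polynomial.tendsto_atTop_of_leadingCoeff_nonneg f hd
      (by simp [hf.leadingCoeff])
    obtain ⟨y, hy⟩ := (htop.eventually_gt_atTop 0).exists_forall_of_atTop
    have hxy : x < y := by
      by_contra hxy; push_neg at hxy; exact absurd (hy x hxy) (not_lt.mpr h1.le)
    obtain ⟨c, hc, hc0⟩ := intermediate_value_Icc hxy.le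
      ((Polynomial.continuous f).continuousOn) ⟨h1.le, (hy y le_rfl).le⟩
    exact h c (lt_of_lt_of_le hx hc.1) hc0
  · exact absurd h1 (h x hx)
  · exact h1

/-- Christoffel-type expansion: if `r` is the largest root of `p_n + α p_{n-1}` (monic
orthogonal polynomials for `μ`), then `(p_n + α p_{n-1})/(t - r)` is a strictly positive
combination of `p₀, …, p_{n-1}`. -/
theorem stmt_7 (μ : Measure ℝ)
    (hint : ∀ q : Polynomial ℝ, Integrable (fun x => q.eval x) μ)
    (hpos : ∀ q : Polynomial ℝ, q ≠ 0 → 0 < ∫ x, (q.eval x) ^ 2 ∂μ)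
    (p : ℕ → Polynomial ℝ) (hmonic : ∀ i, (p i).Monic) (hdeg : ∀ i, (p i).natDegree = i)
    (horth : ∀ i j, i ≠ j → ∫ x, (p i).eval x * (p j).eval x ∂μ = 0)
    (n : ℕ) (hn : 1 ≤ n) (α : ℝ) (r : ℝ)
    (hroot : (p n + C α * p (n - 1)).eval r = 0)
    (hmax : ∀ x : ℝ, (p n + C α * p (n - 1)).eval x = 0 → x ≤ r) :
    ∃ c : ℕ → ℝ, (∀ j < n, 0 < c j) ∧
      p n + C α * p (n - 1) = (X - C r) * ∑ j ∈ Finset.range n, C (c j) * p j := by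
  set q : Polynomial ℝ := p n + C α * p (n - 1) with hq
  have hp0 : p 0 = 1 := (hmonic 0).natDegree_eq_zero.mp (hdeg 0)
  have hdegq : (p n).degree = (n : WithBot ℕ) := by
    rw [degree_eq_natDegree (hmonic n).ne_zero, hdeg n]
  have hstep : (C α * p (n - 1)).degree ≤ (p (n - 1)).degree := by
    rw [← smul_eq_C_mul]
    exact degree_smul_le α (p (n - 1))
  have hdeglt : (C α * p (n - 1)).degree < (p n).degree := by
    refine lt_of_le_of_lt hstep ?_
    rw [degree_eq_natDegree (hmonic (n - 1)).ne_zero, hdeg (n - 1), hdegq]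
    exact_mod_cast (by omega : n - 1 < n)
  have hqmonic : q.Monic := (hmonic n).add_of_left hdeglt
  have hqne : q ≠ 0 := hqmonic.ne_zero
  have hqdegree : q.degree = (n : WithBot ℕ) := by
    rw [hq, degree_add_eq_left_of_degree_lt hdeglt, hdegq]
  have hqdeg : q.natDegree = n := natDegree_eq_of_degree_eq_some hqdegree
  -- factor out (X - r)
  set s : Polynomial ℝ := q /ₘ (X - C r) with hs
  have hqs : (X - C r) * s = q := mul_divByMonic_eq_iff_isRoot.mpr hroot
  have hsmonic : s.Monic := (monic_X_sub_C r).of_mul_monic_left (by rw [hqs]; exact hqmonic)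
  have hsdeg : s.natDegree = n - 1 := by
    have h1 : q.natDegree = (X - C r).natDegree + s.natDegree := by
      rw [← hqs, natDegree_mul (X_sub_C_ne_zero r) hsmonic.ne_zero]
    rw [natDegree_X_sub_C] at h1
    omega
  -- q is positive beyond r
  have hqpos : ∀ x : ℝ, r < x → 0 < q.eval x := by
    refine aux_monic_pos q hqmonic (by rw [hqdegree]; exact_mod_cast hn) r ?_
    intro x hx hx0
    exact absurd (hmax x hx0) (not_le.mpr hx)
  have hqnonneg : ∀ x : ℝ, r ≤ x → 0 ≤ q.eval x := by
    intro x hx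
    rcases hx.lt_or_eq with h | h
    · exact (hqpos x h).le
    · rw [← h]; rw [hq] at hroot ⊢; rw [hroot]
  -- Wronskian of q and p (n-1)
  have hWq : ∀ x : ℝ, 0 < (q.derivative * p (n - 1) - (p (n - 1)).derivative * q).eval x := by
    intro x
    have hW := aux_Wpos hint hpos p hmonic hdeg horth (n - 1) x
    rw [show n - 1 + 1 = n by omega] at hW
    have he : q.derivative * p (n - 1) - (p (n - 1)).derivative * q
        = (p n).derivative * p (n - 1) - (p (n - 1)).derivative * p n := by
      rw [hq]
      simp only [derivative_add, derivative_mul, derivative_C]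
      ring
    rw [he]
    exact hW
  have hpn1 : ∀ x : ℝ, r ≤ x → 0 < (p (n - 1)).eval x :=
    aux_pos_of_wronskian q (p (n - 1)) r (hmonic (n - 1)) hWq hqnonneg
  -- downward chain of positivity
  have hchain : ∀ d : ℕ, ∀ x : ℝ, r ≤ x → 0 < (p (n - 1 - d)).eval x := by
    intro d
    induction d with
    | zero => simpa using hpn1
    | succ d ih =>
      rcases Nat.eq_zero_or_pos (n - 1 - d) with h0 | hm1 
      · intro x hx
        rw [show n - 1 - (d + 1) = 0 by omega, hp0]
        simp
      · have hm2 : n - 1 - (d + 1) = (n - 1 - d) - 1 := by omega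
        rw [hm2]
        refine aux_pos_of_wronskian (p (n - 1 - d)) (p ((n - 1 - d) - 1)) r
          (hmonic _) ?_ (fun x hx => (ih x hx).le)
        intro x
        have hW := aux_Wpos hint hpos p hmonic hdeg horth ((n - 1 - d) - 1) x
        rw [show (n - 1 - d) - 1 + 1 = n - 1 - d by omega] at hW
        exact hW
  have hpj : ∀ j, j < n → 0 < (p j).eval r := by
    intro j hj
    have := hchain (n - 1 - j) r le_rfl
    rwa [show n - 1 - (n - 1 - j) = j by omega] at this
  -- norms
  set N : ℕ → ℝ := fun i => ∫ x, (p i).eval x * (p i).eval x ∂μ with hN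
  have hNpos : ∀ i, 0 < N i := by
    intro i
    have := hpos (p i) (hmonic i).ne_zero
    have h2 : (fun x => ((p i).eval x) ^ 2) = fun x => (p i).eval x * (p i).eval x := by
      funext x; ring
    rw [h2] at this
    exact this
  set I : ℝ := ∫ x, s.eval x ∂μ with hI
  -- key inner products
  have hips : ∀ j, j < n → ∫ x, (p j).eval x * s.eval x ∂μ = (p j).eval r * I := by
    intro j hj
    set h : Polynomial ℝ := (p j - C ((p j).eval r)) /ₘ (X - C r) with hh
    have hhj : (X - C r) * h = p j - C ((p j).eval r) := by
      refine mul_divByMonic_eq_iff_isRoot.mpr ?_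
      simp [IsRoot]
    have hqh : ∫ x, q.eval x * h.eval x ∂μ = 0 := by
      rcases Nat.eq_zero_or_pos j with hj0 | hj1
      · have : h = 0 := by
          rw [hh, hj0, hp0]
          simp
        rw [this]
        simp
      · have hne : p j - C ((p j).eval r) ≠ 0 := by
          intro hcon
          have := natDegree_sub_C (p := p j) (a := (p j).eval r)
          rw [hcon, hdeg j] at this
          simp at this
          omega
        have hhne : h ≠ 0 := by
          intro hcon
          rw [hcon, mul_zero] at hhj
          exact hne hhj.symm
        have hhdeg : h.natDegree = j - 1 := by
          have h1 : (p j - C ((p j).eval r)).natDegree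
              = (X - C r).natDegree + h.natDegree := by
            rw [← hhj, natDegree_mul (X_sub_C_ne_zero r) hhne]
          rw [natDegree_sub_C, hdeg j, natDegree_X_sub_C] at h1
          omega
        have hsplit : (fun x => q.eval x * h.eval x)
            = fun x => (p n).eval x * h.eval x + α * ((p (n - 1)).eval x * h.eval x) := by
          funext x
          rw [hq]
          simp only [eval_add, eval_mul, eval_C]
          ring
        rw [hsplit, integral_add (aux_int_mul hint (p n) h)
          ((aux_int_mul hint (p (n - 1)) h).const_mul α), integral_const_mul,
          aux_orth_lower hint p hmonic hdeg horth n h (by omega),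
          aux_orth_lower hint p hmonic hdeg horth (n - 1) h (by omega)]
        ring
    have hsplit2 : (fun x => (p j).eval x * s.eval x)
        = fun x => (p j).eval r * s.eval x + q.eval x * h.eval x := by
      funext x
      have h1 := congrArg (eval x) hhj
      simp only [eval_mul, eval_sub, eval_C, eval_X] at h1
      have h2 : q.eval x = (x - r) * s.eval x := by
        rw [← hqs]
        simp [eval_mul]
      linear_combination (-(s.eval x)) * h1 - h.eval x * h2
    rw [hsplit2, integral_add ((hint s).const_mul _) (aux_int_mul hint q h),
      integral_const_mul, hqh]
    ring
  -- expansion of s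
  obtain ⟨c, hc⟩ := aux_expand p hmonic hdeg (n - 1) s (by rw [hsdeg])
  rw [show n - 1 + 1 = n by omega] at hc
  have hcj : ∀ j, j < n → c j * N j = (p j).eval r * I := by
    intro j hj
    have h2 : ∫ x, (p j).eval x * s.eval x ∂μ = c j * N j := by
      conv_lhs => rw [hc]
      rw [aux_ip_sum hint p]
      rw [Finset.sum_eq_single_of_mem j (Finset.mem_range.mpr hj)
        (fun i _ hi => by rw [horth j i (Ne.symm hi)]; ring)]
    rw [← h2, hips j hj]
  -- ∫ p (n-1) * s = N (n-1)
  have hIn : N (n - 1) = (p (n - 1)).eval r * I := by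
    rw [← hips (n - 1) (by omega)]
    rcases eq_or_ne s (p (n - 1)) with he | hne
    · rw [he]
    · have hn2 : 2 ≤ n := by
        by_contra hcon
        have hn1 : n = 1 := by omega
        have hs1 : s = 1 := hsmonic.natDegree_eq_zero.mp (by omega)
        have hp01 : p (n - 1) = 1 := by
          rw [hn1]; exact hp0
        rw [hs1, hp01] at hne
        exact hne rfl
      have hlt : (s - p (n - 1)).natDegree < n - 1 := by
        have hle : (s - p (n - 1)).natDegree ≤ n - 2 := by
          rw [natDegree_le_iff_coeff_eq_zero]
          intro M hM
          rcases eq_or_lt_of_le (show n - 1 ≤ M by omega) with h | h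
          · have h1 : s.coeff M = 1 := by
              have := hsmonic.coeff_natDegree
              rw [hsdeg] at this
              rw [← h]; exact this
            have h2 : (p (n - 1)).coeff M = 1 := by
              have := (hmonic (n - 1)).coeff_natDegree
              rw [hdeg (n - 1)] at this
              rw [← h]; exact this
            rw [coeff_sub, h1, h2]; ring
          · rw [coeff_sub, coeff_eq_zero_of_natDegree_lt (by omega),
              coeff_eq_zero_of_natDegree_lt (by rw [hdeg]; omega)]
            ring
        omega
      have hsplit3 : (fun x => (p (n - 1)).eval x * s.eval x)
          = fun x => (p (n - 1)).eval x * (p (n - 1)).eval x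
              + (p (n - 1)).eval x * (s - p (n - 1)).eval x := by
        funext x
        simp only [eval_sub]
        ring
      rw [hsplit3, integral_add (aux_int_mul hint (p (n - 1)) (p (n - 1)))
        (aux_int_mul hint (p (n - 1)) _),
        aux_orth_lower hint p hmonic hdeg horth (n - 1) _ hlt]
      simp [hN]
  have hIpos : 0 < I := by
    have h1 := hNpos (n - 1)
    have h2 := hpj (n - 1) (by omega)
    nlinarith
  refine ⟨c, ?_, ?_⟩
  · intro j hj
    have h1 := hcj j hj
    have h2 := hNpos j
    have h3 := mul_pos (hpj j hj) hIpos
    nlinarith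
  · rw [← hqs, hc]
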